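/- Let s be a word of length 2n over alphabet [k] and write s = s's'' where s' and s'' each have length n. Then s is a reverse shuffle square if and only if there exists a 123-avoiding permutation π of {1,...,n} such that s''_i = s'_{π(i)} for all i. -/

import Mathlib

/-- A word `s` of length `2n` over alphabet `Fin k` is a reverse shuffle square if it
can be partitioned into two disjoint subsequences of length `n` that are reverses of
each other. -/
def IsRevShuffleSquare {n k : ℕ} (s : Fin (2 * n) → Fin k) : Prop :=
  ∃ I J : Fin n → Fin (2 * n), StrictMono I ∧ StrictMono J ∧
    (∀ r r' : Fin n, I r ≠ J r') ∧
    (∀ x : Fin (2 * n), (∃ r, I r = x) ∨ (∃ r, J r = x)) ∧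
    (∀ r : Fin n, s (I r) = s (J r.rev))

/-- A permutation is 123-avoiding if no three indices carry an increasing pattern. -/
def Avoids123 {n : ℕ} (π : Equiv.Perm (Fin n)) : Prop :=
  ¬ ∃ i₁ i₂ i₃ : Fin n, i₁ < i₂ ∧ i₂ < i₃ ∧ π i₁ < π i₂ ∧ π i₂ < π i₃

lemma initseg {n : ℕ} (S : Finset (Fin n)) (hS : ∀ i j : Fin n, i ≤ j → j ∈ S → i ∈ S)
    (i : Fin n) : i ∈ S ↔ (i : ℕ) < S.card := by
  constructor
  · intro hi
    have h1 : Finset.Iic i ⊆ S := fun j hj => hS j i (Finset.mem_Iic.mp hj) hi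
    have := Finset.card_le_card h1
    rw [Fin.card_Iic i] at this; omega
  · intro hi
    by_contra hns
    have h1 : S ⊆ Finset.Iio i := by
      intro j hj
      rw [Finset.mem_Iio]
      by_contra hji
      exact hns (hS i j (le_of_not_gt hji) hj)
    have := Finset.card_le_card h1
    rw [Fin.card_Iio i] at this; omega

lemma rss_mpr {n k : ℕ} (s : Fin (2 * n) → Fin k) (π : Equiv.Perm (Fin n))
    (hπ : Avoids123 π)
    (hs : ∀ i : Fin n, s ⟨n + (i : ℕ), by rw [two_mul]; exact Nat.add_lt_add_left i.isLt n⟩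
      = s ⟨((π i : Fin n) : ℕ), lt_of_lt_of_le (π i).isLt (by rw [two_mul]; exact Nat.le_add_right n n)⟩) :
    IsRevShuffleSquare s := by
  classical
  set A : Finset (Fin n) := Finset.univ.filter (fun i => ∀ m, m < i → π i < π m) with hA
  set α := A.card with hα
  have hαn : α ≤ n := by
    simpa using (Finset.card_le_card (Finset.subset_univ A)).trans_eq (by simp)
  have hBcard : Aᶜ.card = n - α := by rw [Finset.card_compl]; simp [hα]
  set eA := A.orderIsoOfFin (rfl : A.card = α) with heA
  set eB := Aᶜ.orderIsoOfFin hBcard with heB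
  -- π is decreasing on A
  have decA : ∀ i j : Fin n, i ∈ A → j ∈ A → i < j → π j < π i := by
    intro i j hi hj hij
    have := (Finset.mem_filter.mp hj).2
    exact this i hij
  -- π is decreasing on Aᶜ
  have decB : ∀ i j : Fin n, i ∈ Aᶜ → j ∈ Aᶜ → i < j → π j < π i := by
    intro i j hi hj hij
    rcases lt_trichotomy (π j) (π i) with h | h | h
    · exact h
    · exact absurd (π.injective h.symm) (by intro e; exact absurd e (ne_of_lt hij))
    · -- π i < π j ; since i ∉ A, ∃ m < i with π m < π i
      have hi' : i ∉ A := Finset.mem_compl.mp hi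
      rw [hA, Finset.mem_filter] at hi'
      push_neg at hi'
      obtain ⟨m, hmi, hm⟩ := hi' (Finset.mem_univ i)
      have hm' : π m < π i :=
        hm.lt_of_ne (fun h' => (ne_of_lt hmi) (π.injective h'))
      exact absurd ⟨m, i, j, hmi, hij, hm', h⟩ hπ
  -- the embeddings of the two halves
  set L : Fin n → Fin (2 * n) := fun x => Fin.castLE (by omega) x with hL
  set R : Fin n → Fin (2 * n) := fun x => Fin.cast (by omega : n + n = 2 * n) (Fin.natAdd n x) with hR
  have hLval : ∀ x, (L x : ℕ) = (x : ℕ) := fun x => rfl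
  have hRval : ∀ x, (R x : ℕ) = n + (x : ℕ) := fun x => rfl
  have LLlt : ∀ x y : Fin n, x < y → L x < L y := by
    intro x y h
    rw [Fin.lt_def, hLval, hLval]
    exact h
  have LRlt : ∀ x y : Fin n, L x < R y := by
    intro x y
    rw [Fin.lt_def, hLval, hRval]
    exact lt_of_lt_of_le x.isLt (Nat.le_add_right _ _)
  have RRlt : ∀ x y : Fin n, x < y → R x < R y := by
    intro x y h
    rw [Fin.lt_def, hRval, hRval]
    have h' : (x : ℕ) < (y : ℕ) := h
    omega
  set I : Fin n → Fin (2 * n) := fun r =>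
    dite ((r : ℕ) < α) (fun h => L (π (eA ⟨α - 1 - r, by omega⟩)))
      (fun h => R (eB ⟨(r : ℕ) - α, by have := r.isLt; omega⟩)) with hI
  set J : Fin n → Fin (2 * n) := fun t =>
    dite ((t : ℕ) < n - α) (fun h => L (π (eB ⟨n - α - 1 - t, by omega⟩)))
      (fun h => R (eA ⟨(t : ℕ) - (n - α), by have := t.isLt; omega⟩)) with hJ
  have eAlt : ∀ x y : Fin α, x < y → ((eA x : Fin n) : ℕ) < ((eA y : Fin n) : ℕ) := by
    intro x y h
    exact eA.strictMono h
  have eBlt : ∀ x y : Fin (n - α), x < y → ((eB x : Fin n) : ℕ) < ((eB y : Fin n) : ℕ) := by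
    intro x y h
    exact eB.strictMono h
  have eAmem : ∀ x, (eA x : Fin n) ∈ A := fun x => (eA x).2
  have eBmem : ∀ x, (eB x : Fin n) ∈ Aᶜ := fun x => (eB x).2
  refine ⟨I, J, ?_, ?_, ?_, ?_, ?_⟩
  · -- StrictMono I
    intro r r' hrr
    have hv : (r : ℕ) < (r' : ℕ) := hrr
    simp only [hI]
    rcases Nat.lt_or_ge (r' : ℕ) α with h2 | h2
    · rw [dif_pos (lt_trans hv h2), dif_pos h2]
      have hidx : (⟨α - 1 - (r' : ℕ), by omega⟩ : Fin α) < ⟨α - 1 - (r : ℕ), by omega⟩ := by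
        rw [Fin.mk_lt_mk]; omega
      exact LLlt _ _ (decA _ _ (eAmem _) (eAmem _) (by exact_mod_cast eA.strictMono hidx))
    · rw [dif_neg (not_lt.mpr h2)]
      rcases Nat.lt_or_ge (r : ℕ) α with h1 | h1
      · rw [dif_pos h1]
        exact LRlt _ _
      · rw [dif_neg (not_lt.mpr h1)]
        exact RRlt _ _ (eB.strictMono (show (⟨(r : ℕ) - α, by have := r.isLt; omega⟩ : Fin (n - α)) < ⟨(r' : ℕ) - α, by have := r'.isLt; omega⟩ by rw [Fin.mk_lt_mk]; omega))
  · -- StrictMono J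
    intro r r' hrr
    have hv : (r : ℕ) < (r' : ℕ) := hrr
    simp only [hJ]
    rcases Nat.lt_or_ge (r' : ℕ) (n - α) with h2 | h2
    · rw [dif_pos (lt_trans hv h2), dif_pos h2]
      have hidx : (⟨n - α - 1 - (r' : ℕ), by omega⟩ : Fin (n - α)) < ⟨n - α - 1 - (r : ℕ), by omega⟩ := by
        rw [Fin.mk_lt_mk]; omega
      exact LLlt _ _ (decB _ _ (eBmem _) (eBmem _) (by exact_mod_cast eB.strictMono hidx))
    · rw [dif_neg (not_lt.mpr h2)]
      rcases Nat.lt_or_ge (r : ℕ) (n - α) with h1 | h1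
      · rw [dif_pos h1]
        exact LRlt _ _
      · rw [dif_neg (not_lt.mpr h1)]
        exact RRlt _ _ (eA.strictMono (show (⟨(r : ℕ) - (n - α), by have := r.isLt; omega⟩ : Fin α) < ⟨(r' : ℕ) - (n - α), by have := r'.isLt; omega⟩ by rw [Fin.mk_lt_mk]; omega))
  · -- disjointness
    intro r t heq
    simp only [hI, hJ] at heq
    rcases Nat.lt_or_ge (r : ℕ) α with h1 | h1 <;> rcases Nat.lt_or_ge (t : ℕ) (n - α) with h2 | h2
    · rw [dif_pos h1, dif_pos h2] at heq
      have hv := congrArg Fin.val heq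
      simp only [hLval] at hv
      have heq2 : (eA ⟨α - 1 - (r : ℕ), by omega⟩ : Fin n) = (eB ⟨n - α - 1 - (t : ℕ), by omega⟩ : Fin n) :=
        π.injective (Fin.ext hv)
      have hmem := eAmem ⟨α - 1 - (r : ℕ), by omega⟩
      rw [heq2] at hmem
      exact (Finset.mem_compl.mp (eBmem _)) hmem
    · rw [dif_pos h1, dif_neg (not_lt.mpr h2)] at heq
      have hv := congrArg Fin.val heq
      have h3 := Fin.isLt (π (eA ⟨α - 1 - (r : ℕ), by omega⟩))
      simp only [hLval, hRval] at hv
      omega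
    · rw [dif_neg (not_lt.mpr h1), dif_pos h2] at heq
      have hv := congrArg Fin.val heq
      have h3 := Fin.isLt (π (eB ⟨n - α - 1 - (t : ℕ), by omega⟩))
      simp only [hLval, hRval] at hv
      omega
    · rw [dif_neg (not_lt.mpr h1), dif_neg (not_lt.mpr h2)] at heq
      have hv := congrArg Fin.val heq
      simp only [hRval] at hv
      have heq2 : (eB ⟨(r : ℕ) - α, by have := r.isLt; omega⟩ : Fin n)
          = (eA ⟨(t : ℕ) - (n - α), by have := t.isLt; omega⟩ : Fin n) := Fin.ext (by omega)
      have hmem := eBmem ⟨(r : ℕ) - α, by have := r.isLt; omega⟩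
      rw [heq2] at hmem
      exact (Finset.mem_compl.mp hmem) (eAmem _)
  · -- coverage
    intro x
    rcases Nat.lt_or_ge (x : ℕ) n with hx | hx
    · set j : Fin n := π.symm ⟨(x : ℕ), hx⟩ with hj
      by_cases hjA : j ∈ A
      · left
        set m := eA.symm ⟨j, hjA⟩ with hm
        have hm' : (m : ℕ) < α := m.isLt
        refine ⟨⟨α - 1 - (m : ℕ), by omega⟩, ?_⟩
        simp only [hI]
        rw [dif_pos (show α - 1 - (m : ℕ) < α by omega)]
        have hidx : (⟨α - 1 - (α - 1 - (m : ℕ)), by omega⟩ : Fin α) = m := Fin.ext (by simp; omega)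
        rw [hidx]
        have hEm : (eA m : Fin n) = j := by rw [hm]; simp
        apply Fin.ext
        show ((π (eA m : Fin n) : Fin n) : ℕ) = (x : ℕ)
        rw [hEm, hj]
        simp
      · right
        have hjB : j ∈ Aᶜ := Finset.mem_compl.mpr hjA
        set m := eB.symm ⟨j, hjB⟩ with hm
        have hm' : (m : ℕ) < n - α := m.isLt
        refine ⟨⟨n - α - 1 - (m : ℕ), by omega⟩, ?_⟩
        simp only [hJ]
        rw [dif_pos (show n - α - 1 - (m : ℕ) < n - α by omega)]
        have hidx : (⟨n - α - 1 - (n - α - 1 - (m : ℕ)), by omega⟩ : Fin (n - α)) = m :=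
          Fin.ext (by simp; omega)
        rw [hidx]
        have hEm : (eB m : Fin n) = j := by rw [hm]; simp
        apply Fin.ext
        show ((π (eB m : Fin n) : Fin n) : ℕ) = (x : ℕ)
        rw [hEm, hj]
        simp
    · have hx2 : (x : ℕ) - n < n := by have := x.isLt; omega
      set j : Fin n := ⟨(x : ℕ) - n, hx2⟩ with hj
      by_cases hjA : j ∈ A
      · right
        set m := eA.symm ⟨j, hjA⟩ with hm
        have hm' : (m : ℕ) < α := m.isLt
        refine ⟨⟨(n - α) + (m : ℕ), by omega⟩, ?_⟩
        simp only [hJ]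
        rw [dif_neg (show ¬ ((n - α) + (m : ℕ) < n - α) by omega)]
        have hidx : (⟨(n - α) + (m : ℕ) - (n - α), by omega⟩ : Fin α) = m := Fin.ext (by simp)
        rw [hidx]
        have hEm : (eA m : Fin n) = j := by rw [hm]; simp
        apply Fin.ext
        show n + ((eA m : Fin n) : ℕ) = (x : ℕ)
        rw [hEm]
        show n + ((x : ℕ) - n) = (x : ℕ)
        omega
      · left
        have hjB : j ∈ Aᶜ := Finset.mem_compl.mpr hjA
        set m := eB.symm ⟨j, hjB⟩ with hm
        have hm' : (m : ℕ) < n - α := m.isLt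
        refine ⟨⟨α + (m : ℕ), by omega⟩, ?_⟩
        simp only [hI]
        rw [dif_neg (show ¬ (α + (m : ℕ) < α) by omega)]
        have hidx : (⟨α + (m : ℕ) - α, by have := m.isLt; omega⟩ : Fin (n - α)) = m := Fin.ext (by simp)
        rw [hidx]
        have hEm : (eB m : Fin n) = j := by rw [hm]; simp
        apply Fin.ext
        show n + ((eB m : Fin n) : ℕ) = (x : ℕ)
        rw [hEm]
        show n + ((x : ℕ) - n) = (x : ℕ)
        omega
  · -- the reverse matching
    intro r
    have hrn : (r : ℕ) < n := r.isLt
    have hrev : (r.rev : ℕ) = n - ((r : ℕ) + 1) := Fin.val_rev r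
    rcases Nat.lt_or_ge (r : ℕ) α with h1 | h1
    · have h2 : ¬ ((r.rev : ℕ) < n - α) := by omega
      simp only [hI, hJ]
      rw [dif_pos h1, dif_neg h2]
      have hidx : (⟨(r.rev : ℕ) - (n - α), by have := r.rev.isLt; omega⟩ : Fin α)
          = ⟨α - 1 - (r : ℕ), by omega⟩ := Fin.ext (by show (r.rev : ℕ) - (n - α) = α - 1 - (r : ℕ); omega)
      rw [hidx]
      exact (hs (eA ⟨α - 1 - (r : ℕ), by omega⟩ : Fin n)).symm
    · have h2 : (r.rev : ℕ) < n - α := by omega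
      simp only [hI, hJ]
      rw [dif_neg (not_lt.mpr h1), dif_pos h2]
      have hidx : (⟨n - α - 1 - (r.rev : ℕ), by omega⟩ : Fin (n - α))
          = ⟨(r : ℕ) - α, by omega⟩ := Fin.ext (by show n - α - 1 - (r.rev : ℕ) = (r : ℕ) - α; omega)
      rw [hidx]
      exact hs (eB ⟨(r : ℕ) - α, by omega⟩ : Fin n)

lemma rss_mp {n k : ℕ} (s : Fin (2 * n) → Fin k) (h : IsRevShuffleSquare s) :
    ∃ π : Equiv.Perm (Fin n), Avoids123 π ∧
      ∀ i : Fin n,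
        s ⟨n + (i : ℕ), by rw [two_mul]; exact Nat.add_lt_add_left i.isLt n⟩
          = s ⟨((π i : Fin n) : ℕ), lt_of_lt_of_le (π i).isLt (by rw [two_mul]; exact Nat.le_add_right n n)⟩ := by
  classical
  obtain ⟨I, J, hI, hJ, hdisj, hcov, hrev⟩ := h
  rcases Nat.eq_zero_or_pos n with hn | hn
  · subst hn
    refine ⟨Equiv.refl _, ?_, ?_⟩
    · rintro ⟨i, -⟩; exact i.elim0
    · intro i; exact i.elim0
  set SI := Finset.univ.filter (fun r : Fin n => (I r : ℕ) < n) with hSI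
  set SJ := Finset.univ.filter (fun r : Fin n => (J r : ℕ) < n) with hSJ
  set a := SI.card with ha
  set b := SJ.card with hb
  have hIa : ∀ r : Fin n, (I r : ℕ) < n ↔ (r : ℕ) < a := by
    intro r
    have hdc : ∀ i j : Fin n, i ≤ j → j ∈ SI → i ∈ SI := by
      intro i j hij hj
      simp only [hSI, Finset.mem_filter, Finset.mem_univ, true_and] at hj ⊢
      have hle : (I i : ℕ) ≤ (I j : ℕ) := hI.monotone hij
      omega
    have := initseg SI hdc r
    simp only [hSI, Finset.mem_filter, Finset.mem_univ, true_and] at this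
    exact this
  have hJb : ∀ r : Fin n, (J r : ℕ) < n ↔ (r : ℕ) < b := by
    intro r
    have hdc : ∀ i j : Fin n, i ≤ j → j ∈ SJ → i ∈ SJ := by
      intro i j hij hj
      simp only [hSJ, Finset.mem_filter, Finset.mem_univ, true_and] at hj ⊢
      have hle : (J i : ℕ) ≤ (J j : ℕ) := hJ.monotone hij
      omega
    have := initseg SJ hdc r
    simp only [hSJ, Finset.mem_filter, Finset.mem_univ, true_and] at this
    exact this
  have hab : a + b = n := by
    set F : Finset (Fin (2 * n)) := Finset.univ.filter (fun x => (x : ℕ) < n) with hF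
    have hFcard : F.card = n := by
      have : F = Finset.Iio (⟨n, by omega⟩ : Fin (2 * n)) := by
        ext x
        simp [hF, Finset.mem_Iio, Fin.lt_def]
      rw [this, Fin.card_Iio]
    have himg : SI.image I ∪ SJ.image J = F := by
      ext x
      simp only [Finset.mem_union, Finset.mem_image, hSI, hSJ, hF, Finset.mem_filter,
        Finset.mem_univ, true_and]
      constructor
      · rintro (⟨r, hr, rfl⟩ | ⟨r, hr, rfl⟩) <;> exact hr
      · intro hx
        rcases hcov x with ⟨r, rfl⟩ | ⟨r, rfl⟩
        · exact Or.inl ⟨r, hx, rfl⟩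
        · exact Or.inr ⟨r, hx, rfl⟩
    have hdisj2 : Disjoint (SI.image I) (SJ.image J) := by
      rw [Finset.disjoint_left]
      rintro x hx hy
      obtain ⟨r, -, rfl⟩ := Finset.mem_image.mp hx
      obtain ⟨t, -, heq⟩ := Finset.mem_image.mp hy
      exact hdisj r t heq.symm
    have hcu := Finset.card_union_of_disjoint hdisj2
    rw [himg, hFcard, Finset.card_image_of_injective _ hI.injective,
      Finset.card_image_of_injective _ hJ.injective] at hcu
    omega
  have cross : ∀ r : Fin n, ((I r : ℕ) < n) ↔ ¬ ((J r.rev : ℕ) < n) := by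
    intro r
    rw [hIa, hJb]
    have h1 : (r.rev : ℕ) = n - ((r : ℕ) + 1) := Fin.val_rev r
    have := r.isLt
    omega
  set pos : Fin n → Fin (2 * n) := fun i => ⟨n + (i : ℕ), by rw [two_mul]; exact Nat.add_lt_add_left i.isLt n⟩ with hpos
  set P : Fin n → Prop := fun i => ∃ r, I r = pos i with hP
  set f : Fin n → Fin n := fun i =>
    dite (P i)
      (fun h => ⟨(J h.choose.rev : ℕ), by
        have hspec := h.choose_spec
        have h2 : ¬ ((I h.choose : ℕ) < n) := by rw [hspec]; simp [hpos]
        by_contra hh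
        exact h2 ((cross h.choose).mpr hh)⟩)
      (fun h => ⟨(I ((hcov (pos i)).resolve_left h).choose.rev : ℕ), by
        have hspec := ((hcov (pos i)).resolve_left h).choose_spec
        have h2 : ¬ ((J ((hcov (pos i)).resolve_left h).choose : ℕ) < n) := by
          rw [hspec]; simp [hpos]
        apply (cross _).mpr
        rw [Fin.rev_rev]
        exact h2⟩) with hf
  have hfP : ∀ (i : Fin n) (h : P i), (f i : ℕ) = (J h.choose.rev : ℕ) := by
    intro i h
    simp only [hf]
    rw [dif_pos h]
  have hfN : ∀ (i : Fin n) (h : ¬ P i),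
      (f i : ℕ) = (I ((hcov (pos i)).resolve_left h).choose.rev : ℕ) := by
    intro i h
    simp only [hf]
    rw [dif_neg h]
  have hposval : ∀ i : Fin n, (pos i : ℕ) = n + (i : ℕ) := fun i => rfl
  have hinj : Function.Injective f := by
    intro i i' heq
    have hv := congrArg Fin.val heq
    by_cases h : P i <;> by_cases h' : P i'
    · rw [hfP i h, hfP i' h'] at hv
      have h1 : h.choose = h'.choose := Fin.rev_inj.mp (hJ.injective (Fin.ext hv))
      have h2 : pos i = pos i' := by rw [← h.choose_spec, ← h'.choose_spec, h1]
      have h3 := congrArg Fin.val h2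
      rw [hposval, hposval] at h3
      exact Fin.ext (by omega)
    · rw [hfP i h, hfN i' h'] at hv
      exact absurd (Fin.ext hv.symm : I _ = J _) (hdisj _ _)
    · rw [hfN i h, hfP i' h'] at hv
      exact absurd (Fin.ext hv : I _ = J _) (hdisj _ _)
    · rw [hfN i h, hfN i' h'] at hv
      have h1 := Fin.rev_inj.mp (hI.injective (Fin.ext hv))
      have h2 : pos i = pos i' := by
        rw [← ((hcov (pos i)).resolve_left h).choose_spec,
          ← ((hcov (pos i')).resolve_left h').choose_spec, h1]
      have h3 := congrArg Fin.val h2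
      rw [hposval, hposval] at h3
      exact Fin.ext (by omega)
  have decP : ∀ i i' : Fin n, P i → P i' → i < i' → f i' < f i := by
    intro i i' hi hi' hlt
    have h1 : I hi.choose < I hi'.choose := by
      rw [hi.choose_spec, hi'.choose_spec, Fin.lt_def, hposval, hposval]
      have : (i : ℕ) < (i' : ℕ) := hlt
      omega
    have h2 : hi.choose < hi'.choose := hI.lt_iff_lt.mp h1
    have h3 : J hi'.choose.rev < J hi.choose.rev := hJ (Fin.rev_lt_rev.mpr h2)
    rw [Fin.lt_def]
    rw [hfP i hi, hfP i' hi']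
    exact h3
  have decN : ∀ i i' : Fin n, ¬ P i → ¬ P i' → i < i' → f i' < f i := by
    intro i i' hi hi' hlt
    have h1 : J ((hcov (pos i)).resolve_left hi).choose
        < J ((hcov (pos i')).resolve_left hi').choose := by
      rw [((hcov (pos i)).resolve_left hi).choose_spec,
        ((hcov (pos i')).resolve_left hi').choose_spec, Fin.lt_def, hposval, hposval]
      have : (i : ℕ) < (i' : ℕ) := hlt
      omega
    have h2 := hJ.lt_iff_lt.mp h1
    have h3 := hI (Fin.rev_lt_rev.mpr h2)
    rw [Fin.lt_def]
    rw [hfN i hi, hfN i' hi']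
    exact h3
  refine ⟨Equiv.ofBijective f (Finite.injective_iff_bijective.mp hinj), ?_, ?_⟩
  · rintro ⟨i₁, i₂, i₃, h12, h23, g12, g23⟩
    have g12' : f i₁ < f i₂ := g12
    have g23' : f i₂ < f i₃ := g23
    have g13' : f i₁ < f i₃ := lt_trans g12' g23'
    by_cases p1 : P i₁ <;> by_cases p2 : P i₂ <;> by_cases p3 : P i₃
    · exact absurd (decP _ _ p1 p2 h12) (lt_asymm g12')
    · exact absurd (decP _ _ p1 p2 h12) (lt_asymm g12')
    · exact absurd (decP _ _ p1 p3 (lt_trans h12 h23)) (lt_asymm g13')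
    · exact absurd (decN _ _ p2 p3 h23) (lt_asymm g23')
    · exact absurd (decP _ _ p2 p3 h23) (lt_asymm g23')
    · exact absurd (decN _ _ p1 p3 (lt_trans h12 h23)) (lt_asymm g13')
    · exact absurd (decN _ _ p1 p2 h12) (lt_asymm g12')
    · exact absurd (decN _ _ p1 p2 h12) (lt_asymm g12')
  · intro i
    show s (pos i) = s (Fin.castLE (by omega) (f i))
    by_cases h : P i
    · have e1 : Fin.castLE (show n ≤ 2 * n by omega) (f i) = J h.choose.rev := by
        apply Fin.ext
        rw [Fin.coe_castLE]
        exact hfP i h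
      rw [e1]
      have h2 := hrev h.choose
      rw [h.choose_spec] at h2
      exact h2
    · have ht := (hcov (pos i)).resolve_left h
      have e1 : Fin.castLE (show n ≤ 2 * n by omega) (f i) = I ((hcov (pos i)).resolve_left h).choose.rev := by
        apply Fin.ext
        rw [Fin.coe_castLE]
        exact hfN i h
      rw [e1]
      have h2 := hrev ((hcov (pos i)).resolve_left h).choose.rev
      rw [Fin.rev_rev, ((hcov (pos i)).resolve_left h).choose_spec] at h2
      exact h2.symm

theorem revShuffleSquare_iff_avoids123 (n k : ℕ) (s : Fin (2 * n) → Fin k) :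
    IsRevShuffleSquare s ↔
      ∃ π : Equiv.Perm (Fin n), Avoids123 π ∧
        ∀ i : Fin n,
          s ⟨n + (i : ℕ), by have := i.isLt; omega⟩
            = s ⟨((π i : Fin n) : ℕ), by have := (π i).isLt; omega⟩ := by
  constructor
  · exact rss_mp s
  · rintro ⟨π, h1, h2⟩
    exact rss_mpr s π h1 h2
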